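/- arXiv:2005.05827 — 3 statements merged into one kernel-verified Lean document; each statement's English description precedes it below -/
import Mathlib

section
/- Let d ≥ 1 and let ζ = {ζ_k}_{k∈ℤ^d} be a stationary random field of real-valued random variables with E[ζ_0] = 0 and Var(ζ_0) < ∞, satisfying σ̄² := Σ_{k∈ℤ^d} |Cov(ζ_0, ζ_k)| < ∞, and set σ² := Σ_{k∈ℤ^d} Cov(ζ_0, ζ_k). Then for every φ ∈ 𝒞, lim_{n→∞} E(|S_n(φ)|²) = σ² ∫_{ℝ^d} |φ(x)|² dx. -/
open MeasureTheory Filter Complex Topology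

noncomputable section

/-- `S ζ n φ ω = n^{-d/2} ∑_{k ∈ ℤ^d} ζ_k(ω) φ(k/n)`. -/
def S {d : ℕ} {Ω : Type*} (ζ : (Fin d → ℤ) → Ω → ℝ) (n : ℕ)
    (φ : (Fin d → ℝ) → ℝ) (ω : Ω) : ℝ :=
  (n : ℝ) ^ (-(d : ℝ) / 2) * ∑' k : Fin d → ℤ, ζ k ω * φ (fun i => (k i : ℝ) / n)

/-- Stationarity of the random field: every lattice shift leaves the law invariant. -/
def Stationary {d : ℕ} {Ω : Type*} [MeasurableSpace Ω] (P : Measure Ω)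
    (ζ : (Fin d → ℤ) → Ω → ℝ) : Prop :=
  ∀ j : Fin d → ℤ,
    Measure.map (fun ω => fun k => ζ (k + j) ω) P
      = Measure.map (fun ω => fun k => ζ k ω) P

/-- Covariance of two real random variables. -/
def cov {Ω : Type*} [MeasurableSpace Ω] (P : Measure Ω) (X Y : Ω → ℝ) : ℝ :=
  ∫ ω, (X ω - ∫ x, X x ∂P) * (Y ω - ∫ x, Y x ∂P) ∂P

/-- Upright boxes `(a₁,b₁] × ⋯ × (a_d,b_d]`. -/
def IsBox {d : ℕ} (Q : Set (Fin d → ℝ)) : Prop :=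
  ∃ a b : Fin d → ℝ, (∀ i, a i < b i) ∧ Q = {x | ∀ i, a i < x i ∧ x i ≤ b i}

/-- The class 𝒰 of finite linear combinations of indicators of upright boxes. -/
def memU {d : ℕ} (φ : (Fin d → ℝ) → ℝ) : Prop :=
  ∃ (m : ℕ) (c : Fin m → ℝ) (Q : Fin m → Set (Fin d → ℝ)),
    (∀ l, IsBox (Q l)) ∧ φ = fun x => ∑ l, c l * (Q l).indicator (fun _ => (1 : ℝ)) x

/-- The class 𝒞 of bounded compactly supported functions continuous off a finite
union of hyperplanes. -/
def memC {d : ℕ} (φ : (Fin d → ℝ) → ℝ) : Prop :=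
  HasCompactSupport φ ∧ (∃ C : ℝ, ∀ x, |φ x| ≤ C) ∧
    ∃ (m : ℕ) (c : Fin m → Fin d → ℝ) (t : Fin m → ℝ),
      (∀ l, c l ≠ 0) ∧
      ContinuousOn φ (⋃ l, {x : Fin d → ℝ | ∑ i, c l i * x i = t l})ᶜ

/-- Separation of two subsets of ℝ^d in the sup metric
(`dist` on `Fin d → ℝ` is `max_i |x i - y i|`). -/
def sep {d : ℕ} (A B : Set (Fin d → ℝ)) : ℝ :=
  sInf (Set.image2 dist A B)

/-- Condition (AI): asymptotic independence of `S_n(φ₁), S_n(φ₂)` for separated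
supports. -/
def AI {d : ℕ} {Ω : Type*} [MeasurableSpace Ω] (P : Measure Ω)
    (ζ : (Fin d → ℤ) → Ω → ℝ) : Prop :=
  ∀ δ : ℝ, 0 < δ → ∀ φ₁ φ₂ : (Fin d → ℝ) → ℝ, memU φ₁ → memU φ₂ →
    δ ≤ sep (Function.support φ₁) (Function.support φ₂) →
    ∀ a b : ℝ,
      Tendsto (fun n : ℕ =>
          (∫ ω, Complex.exp (Complex.I * ((a * S ζ n φ₁ ω + b * S ζ n φ₂ ω : ℝ) : ℂ)) ∂P)
            - (∫ ω, Complex.exp (Complex.I * ((a * S ζ n φ₁ ω : ℝ) : ℂ)) ∂P)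
              * (∫ ω, Complex.exp (Complex.I * ((b * S ζ n φ₂ ω : ℝ) : ℂ)) ∂P))
        atTop (𝓝 0)

namespace RS

variable {d : ℕ}

/-- the cell map -/
def ce (n : ℕ) (x : Fin d → ℝ) : Fin d → ℤ := fun i => ⌈(n : ℝ) * x i⌉

lemma measurable_ce (n : ℕ) : Measurable (ce (d := d) n) :=
  measurable_pi_lambda _ fun i => Int.measurable_ceil.comp ((measurable_pi_apply i).const_mul _)

/-- lattice values -/
def av (φ : (Fin d → ℝ) → ℝ) (n : ℕ) (k : Fin d → ℤ) : ℝ := φ (fun i => (k i : ℝ) / n)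

/-- the Riemann-type integral -/
def A (φ : (Fin d → ℝ) → ℝ) (n : ℕ) (j : Fin d → ℤ) : ℝ :=
  ∫ x : Fin d → ℝ, av φ n (ce n x) * av φ n (ce n x + j)

lemma step {n : ℕ} (hn : 1 ≤ n) (f : (Fin d → ℤ) → ℝ)
    (s : Finset (Fin d → ℤ)) (hs : ∀ k ∉ s, f k = 0) :
    ∫ x : Fin d → ℝ, f (ce n x) = ((n : ℝ) ^ d)⁻¹ * ∑ k ∈ s, f k := by
  have hn0 : (0 : ℝ) < n := by exact_mod_cast hn
  have hcell : ∀ k : Fin d → ℤ, ce (d := d) n ⁻¹' {k}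
      = Set.univ.pi fun i => Set.Ioc (((k i : ℝ) - 1) / n) ((k i : ℝ) / n) := by
    intro k; ext x
    simp only [Set.mem_preimage, Set.mem_singleton_iff, Set.mem_pi, Set.mem_univ,
      true_implies, Set.mem_Ioc, funext_iff, ce]
    refine forall_congr' fun i => ?_
    rw [Int.ceil_eq_iff]
    constructor <;> rintro ⟨h1, h2⟩ <;> refine ⟨?_, ?_⟩
    · exact (div_lt_iff₀ hn0).mpr (by linarith [mul_comm (x i) (n : ℝ)])
    · exact (le_div_iff₀ hn0).mpr (by linarith [mul_comm (x i) (n : ℝ)])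
    · have := (div_lt_iff₀ hn0).mp h1; linarith [mul_comm (x i) (n : ℝ)]
    · have := (le_div_iff₀ hn0).mp h2; linarith [mul_comm (x i) (n : ℝ)]
  have hmc : ∀ k : Fin d → ℤ, MeasurableSet (ce (d := d) n ⁻¹' {k}) :=
    fun k => measurable_ce n (measurableSet_singleton k)
  have hvol : ∀ k : Fin d → ℤ, volume (ce (d := d) n ⁻¹' {k})
      = ENNReal.ofReal (((n : ℝ) ^ d)⁻¹) := by
    intro k
    have h1 : ∀ i : Fin d, volume (Set.Ioc (((k i : ℝ) - 1) / n) ((k i : ℝ) / n))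
        = ENNReal.ofReal (1 / n) := by
      intro i; rw [Real.volume_Ioc]; congr 1; field_simp; ring
    rw [hcell, volume_pi_pi]
    simp only [h1, Finset.prod_const, Finset.card_univ, Fintype.card_fin]
    rw [← ENNReal.ofReal_pow (by positivity)]
    congr 1
    rw [one_div, inv_pow]
  have hfun : (fun x : Fin d → ℝ => f (ce n x))
      = fun x => ∑ k ∈ s, (ce (d := d) n ⁻¹' {k}).indicator (fun _ => f k) x := by
    funext x
    by_cases hx : ce n x ∈ s
    · rw [Finset.sum_eq_single_of_mem _ hx]
      · exact (Set.indicator_of_mem (Set.mem_preimage.mpr rfl) (fun _ => f (ce n x))).symm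
      · intro b _ hb
        exact Set.indicator_of_notMem
          (fun h => hb (Set.mem_singleton_iff.mp (Set.mem_preimage.mp h)).symm) _
    · rw [hs _ hx]
      symm
      apply Finset.sum_eq_zero
      intro b hb
      apply Set.indicator_of_notMem
      intro hxb
      exact hx ((Set.mem_singleton_iff.mp hxb) ▸ hb)
  rw [hfun, integral_finset_sum]
  · have h2 : ∀ k ∈ s, ∫ x : Fin d → ℝ, (ce (d := d) n ⁻¹' {k}).indicator (fun _ => f k) x
        = ((n : ℝ) ^ d)⁻¹ * f k := by
      intro k _
      rw [integral_indicator_const (f k) (hmc k), measureReal_def, hvol k,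
        ENNReal.toReal_ofReal (by positivity), smul_eq_mul]
    rw [Finset.sum_congr rfl h2, ← Finset.mul_sum]
  · intro k _
    rw [integrable_indicator_iff (hmc k)]
    exact integrableOn_const (by rw [hvol k]; exact ENNReal.ofReal_ne_top) enorm_ne_top

lemma memC_bits {φ : (Fin d → ℝ) → ℝ} (hφ : memC φ) :
    ∃ B R : ℝ, 0 ≤ B ∧ 0 ≤ R ∧ (∀ x, |φ x| ≤ B) ∧
      tsupport φ ⊆ Metric.closedBall 0 R := by
  obtain ⟨h1, ⟨C, hC⟩, _⟩ := hφ
  obtain ⟨R₀, hR₀⟩ := h1.isBounded.subset_closedBall (0 : Fin d → ℝ)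
  exact ⟨max C 0, max R₀ 0, le_max_right _ _, le_max_right _ _,
    fun x => (hC x).trans (le_max_left _ _),
    hR₀.trans (Metric.closedBall_subset_closedBall (le_max_left _ _))⟩

/-- lattice box -/
def box (R : ℝ) (n : ℕ) : Finset (Fin d → ℤ) :=
  Fintype.piFinset fun _ => Finset.Icc (-⌈R * (n : ℝ)⌉) ⌈R * (n : ℝ)⌉

lemma av_zero {φ : (Fin d → ℝ) → ℝ} {R : ℝ}
    (hsupp : tsupport φ ⊆ Metric.closedBall 0 R) {n : ℕ} (hn : 1 ≤ n)
    {k : Fin d → ℤ} (hk : k ∉ box (d := d) R n) : av φ n k = 0 := by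
  have hn0 : (0 : ℝ) < n := by exact_mod_cast hn
  rw [box, Fintype.mem_piFinset] at hk
  push_neg at hk
  obtain ⟨i, hi⟩ := hk
  rw [Finset.mem_Icc, not_and_or] at hi
  have hKi : (⌈R * (n : ℝ)⌉ : ℤ) < |k i| := by
    rw [lt_abs]
    rcases hi with h | h <;> push_neg at h
    · right; linarith
    · left; exact h
  have h1 : R * n < |(k i : ℝ)| := by
    have h2 : ((⌈R * (n : ℝ)⌉ : ℤ) : ℝ) < ((|k i| : ℤ) : ℝ) := by exact_mod_cast hKi
    rw [Int.cast_abs] at h2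
    linarith [Int.le_ceil (R * (n : ℝ))]
  have h2 : R < |(k i : ℝ)| / n := by
    rw [lt_div_iff₀ hn0]; linarith [mul_comm R (n : ℝ)]
  show φ (fun i => (k i : ℝ) / (n : ℝ)) = 0
  apply image_eq_zero_of_notMem_tsupport
  intro hmem
  have h3 := hsupp hmem
  rw [Metric.mem_closedBall, dist_zero_right] at h3
  have h4 : |(k i : ℝ)| / n ≤ ‖fun i => (k i : ℝ) / (n : ℝ)‖ := by
    simpa using norm_le_pi_norm (fun i => (k i : ℝ) / (n : ℝ)) i
  linarith

lemma ptw_bound {φ : (Fin d → ℝ) → ℝ} {B R : ℝ} (hB : ∀ x, |φ x| ≤ B)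
    (hsupp : tsupport φ ⊆ Metric.closedBall 0 R) {n : ℕ} (hn : 1 ≤ n)
    (j : Fin d → ℤ) (x : Fin d → ℝ) :
    ‖av φ n (ce n x) * av φ n (ce n x + j)‖ ≤
      (Metric.closedBall (0 : Fin d → ℝ) (R + 1)).indicator (fun _ => B * B) x := by
  have hB0 : 0 ≤ B := le_trans (abs_nonneg _) (hB 0)
  have hn0 : (0 : ℝ) < n := by exact_mod_cast hn
  by_cases hx : x ∈ Metric.closedBall (0 : Fin d → ℝ) (R + 1)
  · rw [Set.indicator_of_mem hx, Real.norm_eq_abs, abs_mul]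
    exact mul_le_mul (hB _) (hB _) (abs_nonneg _) hB0
  · rw [Set.indicator_of_notMem hx]
    have h0 : av φ n (ce n x) = 0 := by
      show φ (fun i => ((ce n x) i : ℝ) / (n : ℝ)) = 0
      apply image_eq_zero_of_notMem_tsupport
      intro hmem
      apply hx
      have h1 := hsupp hmem
      rw [Metric.mem_closedBall, dist_zero_right] at h1 ⊢
      set ρ : Fin d → ℝ := fun i => ((ce n x) i : ℝ) / n with hρ
      have h2 : ‖x - ρ‖ ≤ 1 := by
        rw [pi_norm_le_iff_of_nonneg zero_le_one]
        intro i
        have hceil1 : (n : ℝ) * x i ≤ (⌈(n : ℝ) * x i⌉ : ℝ) := Int.le_ceil _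
        have hceil2 : (⌈(n : ℝ) * x i⌉ : ℝ) < (n : ℝ) * x i + 1 := Int.ceil_lt_add_one _
        have hl : x i ≤ ρ i := by
          rw [hρ]
          rw [le_div_iff₀ hn0]
          show x i * n ≤ ((⌈(n:ℝ) * x i⌉ : ℤ) : ℝ)
          linarith [mul_comm (x i) (n : ℝ)]
        have hu : ρ i ≤ x i + 1 := by
          rw [hρ]
          rw [div_le_iff₀ hn0]
          show ((⌈(n:ℝ) * x i⌉ : ℤ) : ℝ) ≤ (x i + 1) * n
          have hn1 : (1 : ℝ) ≤ n := by exact_mod_cast hn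
          nlinarith [mul_comm (x i) (n : ℝ)]
        rw [Real.norm_eq_abs, Pi.sub_apply, abs_le]
        constructor <;> linarith
      calc ‖x‖ = ‖(x - ρ) + ρ‖ := by rw [sub_add_cancel]
        _ ≤ ‖x - ρ‖ + ‖ρ‖ := norm_add_le _ _
        _ ≤ 1 + R := add_le_add h2 h1
        _ = R + 1 := by ring
    rw [h0, zero_mul, norm_zero]

lemma bound_integrable (B R : ℝ) :
    Integrable ((Metric.closedBall (0 : Fin d → ℝ) (R + 1)).indicator
      (fun _ => B * B)) := by
  rw [integrable_indicator_iff measurableSet_closedBall]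
  exact integrableOn_const measure_closedBall_lt_top.ne enorm_ne_top

lemma A_bound {φ : (Fin d → ℝ) → ℝ} {B R : ℝ} (hB : ∀ x, |φ x| ≤ B)
    (hsupp : tsupport φ ⊆ Metric.closedBall 0 R) {n : ℕ} (hn : 1 ≤ n)
    (j : Fin d → ℤ) :
    |A φ n j| ≤ (volume (Metric.closedBall (0 : Fin d → ℝ) (R + 1))).toReal * (B * B) := by
  have h := norm_integral_le_of_norm_le (bound_integrable B R)
    (Eventually.of_forall (ptw_bound hB hsupp hn j))
  rw [Real.norm_eq_abs] at h
  calc |A φ n j| ≤ ∫ x : Fin d → ℝ,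
        (Metric.closedBall (0 : Fin d → ℝ) (R + 1)).indicator (fun _ => B * B) x := h
    _ = (volume (Metric.closedBall (0 : Fin d → ℝ) (R + 1))).toReal * (B * B) := by
        rw [integral_indicator_const _ measurableSet_closedBall, smul_eq_mul, measureReal_def]

lemma hyper_null {c : Fin d → ℝ} (hc : c ≠ 0) (t : ℝ) :
    volume {x : Fin d → ℝ | ∑ i, c i * x i = t} = 0 := by
  obtain ⟨i, hi⟩ := Function.ne_iff.mp hc
  simp only [Pi.zero_apply] at hi
  set L : (Fin d → ℝ) →ₗ[ℝ] ℝ :=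
    ∑ i' : Fin d, c i' • LinearMap.proj i' with hLdef
  have hL : ∀ x, L x = ∑ i', c i' * x i' := by
    intro x
    simp [hLdef, LinearMap.sum_apply, LinearMap.smul_apply, LinearMap.proj_apply,
      smul_eq_mul]
  have hsingle : L (Pi.single i 1) = c i := by
    rw [hL, Finset.sum_eq_single i
      (fun b _ hb => by rw [Pi.single_eq_of_ne hb, mul_zero])
      (fun h => absurd (Finset.mem_univ i) h)]
    rw [Pi.single_eq_same, mul_one]
  set x₀ : Fin d → ℝ := (t / c i) • (Pi.single i (1 : ℝ) : Fin d → ℝ) with hx₀def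
  have hx₀ : L x₀ = t := by
    rw [hx₀def, LinearMap.map_smul, hsingle, smul_eq_mul]
    field_simp
  have hker : LinearMap.ker L ≠ ⊤ := by
    intro h
    rw [LinearMap.ker_eq_top] at h
    rw [h] at hsingle
    simp only [LinearMap.zero_apply] at hsingle
    exact hi hsingle.symm
  have hset : {x : Fin d → ℝ | ∑ i', c i' * x i' = t}
      = (fun x => -x₀ + x) ⁻¹' ((LinearMap.ker L : Submodule ℝ (Fin d → ℝ)) : Set (Fin d → ℝ)) := by
    ext x
    simp only [Set.mem_setOf_eq, Set.mem_preimage, SetLike.mem_coe, LinearMap.mem_ker]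
    rw [neg_add_eq_sub, map_sub, hx₀, hL, sub_eq_zero]
  rw [hset, measure_preimage_add]
  exact Measure.addHaar_submodule volume _ hker

lemma A_tendsto {φ : (Fin d → ℝ) → ℝ} (hφ : memC φ) (j : Fin d → ℤ) :
    Tendsto (fun n : ℕ => A φ (n + 1) j) atTop (𝓝 (∫ x : Fin d → ℝ, φ x ^ 2)) := by
  obtain ⟨B, R, hB0, hR0, hB, hsupp⟩ := memC_bits hφ
  obtain ⟨-, -, m, cc, t, hcc, hcont⟩ := hφ
  set N : Set (Fin d → ℝ) := ⋃ l, {x | ∑ i, cc l i * x i = t l} with hNdef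
  have hN0 : volume N = 0 := measure_iUnion_null fun l => hyper_null (hcc l) (t l)
  have hNclosed : IsClosed N := isClosed_iUnion_of_finite fun l =>
    isClosed_eq (continuous_finset_sum _ fun i _ => continuous_const.mul (continuous_apply i))
      continuous_const
  have key := tendsto_integral_of_dominated_convergence
    (μ := (volume : Measure (Fin d → ℝ)))
    (F := fun (n : ℕ) (x : Fin d → ℝ) =>
      av φ (n + 1) (ce (n + 1) x) * av φ (n + 1) (ce (n + 1) x + j))
    (f := fun x => φ x ^ 2)
    ((Metric.closedBall (0 : Fin d → ℝ) (R + 1)).indicator (fun _ => B * B))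
    (fun n => ((measurable_of_countable
        (fun k : Fin d → ℤ => av φ (n + 1) k * av φ (n + 1) (k + j))).comp
        (measurable_ce (n + 1))).aestronglyMeasurable)
    (bound_integrable B R)
    (fun n => Eventually.of_forall (ptw_bound hB hsupp (Nat.le_add_left 1 n) j))
    ?_
  · exact key
  · have hae : ∀ᵐ x : Fin d → ℝ, x ∉ N := by
      rw [ae_iff]
      simpa [Set.setOf_mem_eq] using hN0
    filter_upwards [hae] with x hx
    have hc : ContinuousAt φ x := hcont.continuousAt (hNclosed.isOpen_compl.mem_nhds hx)
    have hcoord : ∀ i : Fin d, Tendsto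
        (fun n : ℕ => ((ce (n + 1) x) i : ℝ) / ((n : ℝ) + 1)) atTop (𝓝 (x i)) := by
      intro i
      have hup : Tendsto (fun n : ℕ => x i + 1 / ((n : ℝ) + 1)) atTop (𝓝 (x i)) := by
        have := tendsto_one_div_add_atTop_nhds_zero_nat (𝕜 := ℝ)
        simpa using tendsto_const_nhds.add this
      refine tendsto_of_tendsto_of_tendsto_of_le_of_le tendsto_const_nhds hup ?_ ?_
      · intro n
        have hn0 : (0 : ℝ) < (n : ℝ) + 1 := by positivity
        rw [le_div_iff₀ hn0]
        have h1 : ((n : ℕ) + 1 : ℝ) * x i ≤ (⌈(((n : ℕ) + 1 : ℕ) : ℝ) * x i⌉ : ℝ) := by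
          push_cast
          exact Int.le_ceil _
        show x i * ((n : ℝ) + 1) ≤ ((⌈((((n : ℕ) + 1 : ℕ)) : ℝ) * x i⌉ : ℤ) : ℝ)
        calc x i * ((n : ℝ) + 1) = ((n : ℝ) + 1) * x i := mul_comm _ _
          _ ≤ _ := h1
      · intro n
        have hn0 : (0 : ℝ) < (n : ℝ) + 1 := by positivity
        rw [div_le_iff₀ hn0]
        have h1 : (⌈(((n : ℕ) + 1 : ℕ) : ℝ) * x i⌉ : ℝ) < ((n : ℝ) + 1) * x i + 1 := by
          push_cast
          exact Int.ceil_lt_add_one _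
        have h2 : (x i + 1 / ((n : ℝ) + 1)) * ((n : ℝ) + 1)
            = ((n : ℝ) + 1) * x i + 1 := by field_simp
        rw [h2]
        exact le_of_lt h1
    have h1 : Tendsto (fun n : ℕ => (fun i => ((ce (n + 1) x) i : ℝ) / ((n + 1 : ℕ) : ℝ)))
        atTop (𝓝 x) := by
      rw [tendsto_pi_nhds]
      intro i
      have := hcoord i
      simpa [Nat.cast_add, Nat.cast_one] using this
    have h2 : Tendsto (fun n : ℕ => (fun i => (((ce (n + 1) x + j) i : ℤ) : ℝ) / ((n + 1 : ℕ) : ℝ)))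
        atTop (𝓝 x) := by
      rw [tendsto_pi_nhds]
      intro i
      have hj : Tendsto (fun n : ℕ => (j i : ℝ) / ((n : ℝ) + 1)) atTop (𝓝 0) := by
        have := tendsto_one_div_add_atTop_nhds_zero_nat (𝕜 := ℝ)
        have h3 := this.const_mul (j i : ℝ)
        simpa [mul_one_div, div_eq_mul_inv] using h3
      have h4 := (hcoord i).add hj
      rw [add_zero] at h4
      refine h4.congr fun n => ?_
      rw [Pi.add_apply]
      push_cast
      rw [← add_div]
    have h5 : Tendsto (fun n : ℕ =>
        av φ (n + 1) (ce (n + 1) x) * av φ (n + 1) (ce (n + 1) x + j))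
        atTop (𝓝 (φ x * φ x)) := by
      exact (hc.tendsto.comp h1).mul (hc.tendsto.comp h2)
    simpa [sq] using h5

end RS


/-- For a stationary, short-range dependent field and `φ ∈ 𝒞`,
`E(|S_n(φ)|²) → σ² ∫_{ℝ^d} |φ(x)|² dx` as `n → ∞`. -/
theorem stmt3 {d : ℕ} [NeZero d] {Ω : Type*} [MeasurableSpace Ω]
    (P : Measure Ω) [IsProbabilityMeasure P]
    (ζ : (Fin d → ℤ) → Ω → ℝ)
    (hmeas : ∀ k, Measurable (ζ k))
    (hstat : Stationary P ζ)
    (hmean : ∫ ω, ζ 0 ω ∂P = 0)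
    (hvar : Integrable (fun ω => (ζ 0 ω) ^ 2) P)
    (hSRD : Summable (fun k : Fin d → ℤ => |cov P (ζ 0) (ζ k)|))
    (φ : (Fin d → ℝ) → ℝ) (hφ : memC φ) :
    Tendsto (fun n : ℕ => ∫ ω, (S ζ n φ ω) ^ 2 ∂P) atTop
      (𝓝 ((∑' k : Fin d → ℤ, cov P (ζ 0) (ζ k)) * ∫ x : Fin d → ℝ, (φ x) ^ 2)) := by
  classical
  obtain ⟨B, R, hB0, hR0, hB, hsupp⟩ := RS.memC_bits hφ
  set M : ℝ := (volume (Metric.closedBall (0 : Fin d → ℝ) (R + 1))).toReal * (B * B) with hM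
  have hΦ : Measurable (fun ω => fun m : Fin d → ℤ => ζ m ω) :=
    measurable_pi_lambda _ fun m => hmeas m
  have hΦs : ∀ k : Fin d → ℤ, Measurable (fun ω => fun m : Fin d → ℤ => ζ (m + k) ω) :=
    fun k => measurable_pi_lambda _ fun m => hmeas (m + k)
  have hlaw : ∀ k : Fin d → ℤ, Measure.map (ζ k) P = Measure.map (ζ 0) P := by
    intro k
    have e0 : Measurable (fun x : (Fin d → ℤ) → ℝ => x 0) := measurable_pi_apply 0
    calc Measure.map (ζ k) P
        = Measure.map (fun x : (Fin d → ℤ) → ℝ => x 0)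
            (Measure.map (fun ω => fun m => ζ (m + k) ω) P) := by
          rw [Measure.map_map e0 (hΦs k)]
          congr 1
          funext ω
          simp [Function.comp]
      _ = Measure.map (fun x : (Fin d → ℤ) → ℝ => x 0)
            (Measure.map (fun ω => fun m => ζ m ω) P) := by rw [hstat k]
      _ = Measure.map (ζ 0) P := by rw [Measure.map_map e0 hΦ]; rfl
  have hmean' : ∀ k : Fin d → ℤ, ∫ ω, ζ k ω ∂P = 0 := by
    intro k
    have h1 : ∫ ω, ζ k ω ∂P = ∫ x, x ∂(Measure.map (ζ k) P) :=
      (integral_map (f := fun x : ℝ => x) (hmeas k).aemeasurable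
        measurable_id.aestronglyMeasurable).symm
    rw [h1, hlaw k, integral_map (f := fun x : ℝ => x) (hmeas 0).aemeasurable
      measurable_id.aestronglyMeasurable]
    exact hmean
  have hsq : ∀ k : Fin d → ℤ, Integrable (fun ω => ζ k ω ^ 2) P := by
    intro k
    have hg : AEStronglyMeasurable (fun x : ℝ => x ^ 2) (Measure.map (ζ 0) P) :=
      (measurable_id.pow_const 2).aestronglyMeasurable
    have hg' : AEStronglyMeasurable (fun x : ℝ => x ^ 2) (Measure.map (ζ k) P) := by
      rw [hlaw k]; exact hg
    have h1 : Integrable (fun x : ℝ => x ^ 2) (Measure.map (ζ 0) P) :=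
      (integrable_map_measure hg (hmeas 0).aemeasurable).mpr hvar
    exact (integrable_map_measure hg' (hmeas k).aemeasurable).mp (by rwa [hlaw k])
  have hmul : ∀ k l : Fin d → ℤ, Integrable (fun ω => ζ k ω * ζ l ω) P := by
    intro k l
    refine Integrable.mono' ((hsq k).add (hsq l))
      ((hmeas k).mul (hmeas l)).aestronglyMeasurable (Eventually.of_forall fun ω => ?_)
    rw [Real.norm_eq_abs, abs_mul]
    simp only [Pi.add_apply]
    nlinarith [sq_nonneg (|ζ k ω| - |ζ l ω|), _root_.sq_abs (ζ k ω), _root_.sq_abs (ζ l ω),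
      abs_nonneg (ζ k ω), abs_nonneg (ζ l ω)]
  have hcv : ∀ k l : Fin d → ℤ, ∫ ω, ζ k ω * ζ l ω ∂P = cov P (ζ 0) (ζ (l - k)) := by
    intro k l
    have hg : Measurable (fun x : (Fin d → ℤ) → ℝ => x 0 * x (l - k)) :=
      (measurable_pi_apply 0).mul (measurable_pi_apply (l - k))
    have h1 : ∫ ω, ζ k ω * ζ l ω ∂P = ∫ ω, ζ 0 ω * ζ (l - k) ω ∂P := by
      calc ∫ ω, ζ k ω * ζ l ω ∂P
          = ∫ ω, (fun x : (Fin d → ℤ) → ℝ => x 0 * x (l - k))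
              ((fun ω => fun m => ζ (m + k) ω) ω) ∂P := by
            congr 1; funext ω; simp
        _ = ∫ x, x 0 * x (l - k) ∂(Measure.map (fun ω => fun m => ζ (m + k) ω) P) :=
            (integral_map (hΦs k).aemeasurable hg.aestronglyMeasurable).symm
        _ = ∫ x, x 0 * x (l - k) ∂(Measure.map (fun ω => fun m => ζ m ω) P) := by
            rw [hstat k]
        _ = ∫ ω, ζ 0 ω * ζ (l - k) ω ∂P :=
            integral_map hΦ.aemeasurable hg.aestronglyMeasurable
    rw [h1, cov, hmean, hmean' (l - k)]
    simp
  have hkey : ∀ n : ℕ, 1 ≤ n → ∫ ω, (S ζ n φ ω) ^ 2 ∂P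
      = ∑' j : Fin d → ℤ, cov P (ζ 0) (ζ j) * RS.A φ n j := by
    intro n hn
    have hn0 : (0 : ℝ) < n := by exact_mod_cast hn
    set F : Finset (Fin d → ℤ) := RS.box R n with hF
    have hav0 : ∀ k ∉ F, RS.av φ n k = 0 := fun k hk => RS.av_zero hsupp hn hk
    have hS : ∀ ω, S ζ n φ ω = (n : ℝ) ^ (-(d : ℝ) / 2) * ∑ k ∈ F, ζ k ω * RS.av φ n k := by
      intro ω
      rw [S]
      congr 1
      exact tsum_eq_sum fun k hk => by rw [show φ (fun i => (k i : ℝ) / (n:ℝ)) = RS.av φ n k from rfl, hav0 k hk, mul_zero]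
    have hpow : ((n : ℝ) ^ (-(d : ℝ) / 2)) ^ 2 = ((n : ℝ) ^ d)⁻¹ := by
      have h1 : ((n : ℝ) ^ (-(d : ℝ) / 2)) ^ (2 : ℕ) = (n : ℝ) ^ ((-(d : ℝ) / 2) * 2) := by
        rw [← Real.rpow_natCast ((n : ℝ) ^ (-(d : ℝ) / 2)) 2, ← Real.rpow_mul hn0.le]
        norm_num
      rw [h1, show (-(d : ℝ) / 2) * 2 = -(d : ℝ) by ring, Real.rpow_neg hn0.le,
        Real.rpow_natCast]
    have hfun : (fun ω => (S ζ n φ ω) ^ 2)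
        = fun ω => ((n : ℝ) ^ d)⁻¹ * (∑ k ∈ F, ζ k ω * RS.av φ n k) ^ 2 := by
      funext ω; rw [hS ω, mul_pow, hpow]
    have hexp : ∀ ω : Ω, (∑ k ∈ F, ζ k ω * RS.av φ n k) ^ 2
        = ∑ k ∈ F, ∑ l ∈ F, (RS.av φ n k * RS.av φ n l) * (ζ k ω * ζ l ω) := by
      intro ω
      rw [sq, Finset.sum_mul_sum]
      exact Finset.sum_congr rfl fun k _ => Finset.sum_congr rfl fun l _ => by ring
    have hint : ∫ ω, (∑ k ∈ F, ζ k ω * RS.av φ n k) ^ 2 ∂P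
        = ∑ k ∈ F, ∑ l ∈ F, RS.av φ n k * RS.av φ n l * cov P (ζ 0) (ζ (l - k)) := by
      simp_rw [hexp]
      rw [integral_finset_sum _ fun k _ => integrable_finset_sum _ fun l _ =>
        ((hmul k l).const_mul _)]
      refine Finset.sum_congr rfl fun k _ => ?_
      rw [integral_finset_sum _ fun l _ => ((hmul k l).const_mul _)]
      refine Finset.sum_congr rfl fun l _ => ?_
      rw [integral_const_mul, hcv k l]
    have hrdx : ∀ k ∈ F, ∑ l ∈ F, RS.av φ n k * RS.av φ n l * cov P (ζ 0) (ζ (l - k))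
        = ∑' j : Fin d → ℤ, RS.av φ n k * RS.av φ n (k + j) * cov P (ζ 0) (ζ j) := by
      intro k _
      refine Eq.symm ?_
      calc ∑' j : Fin d → ℤ, RS.av φ n k * RS.av φ n (k + j) * cov P (ζ 0) (ζ j)
          = ∑' j : Fin d → ℤ, (fun l => RS.av φ n k * RS.av φ n l * cov P (ζ 0) (ζ (l - k)))
              ((Equiv.addLeft k) j) := by
            refine tsum_congr fun j => ?_
            simp [Equiv.coe_addLeft, add_sub_cancel_left]
        _ = ∑' l : Fin d → ℤ, RS.av φ n k * RS.av φ n l * cov P (ζ 0) (ζ (l - k)) :=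
            Equiv.tsum_eq (Equiv.addLeft k)
              (fun l => RS.av φ n k * RS.av φ n l * cov P (ζ 0) (ζ (l - k)))
        _ = ∑ l ∈ F, RS.av φ n k * RS.av φ n l * cov P (ζ 0) (ζ (l - k)) :=
            tsum_eq_sum fun l hl => by rw [hav0 l hl, mul_zero, zero_mul]
    have hswap : ∑ k ∈ F, ∑' j : Fin d → ℤ,
          RS.av φ n k * RS.av φ n (k + j) * cov P (ζ 0) (ζ j)
        = ∑' j : Fin d → ℤ, ∑ k ∈ F,
          RS.av φ n k * RS.av φ n (k + j) * cov P (ζ 0) (ζ j) := by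
      refine (Summable.tsum_finsetSum fun k _ => ?_).symm
      apply summable_of_ne_finset_zero (s := F.image (fun l => l - k))
      intro j hj
      have h0 : RS.av φ n (k + j) = 0 := by
        apply hav0
        intro hmem
        exact hj (Finset.mem_image.mpr ⟨k + j, hmem, by simp⟩)
      rw [h0, mul_zero, zero_mul]
    calc ∫ ω, (S ζ n φ ω) ^ 2 ∂P
        = ((n : ℝ) ^ d)⁻¹ * ∫ ω, (∑ k ∈ F, ζ k ω * RS.av φ n k) ^ 2 ∂P := by
          rw [hfun, integral_const_mul]
      _ = ((n : ℝ) ^ d)⁻¹ * ∑' j : Fin d → ℤ, ∑ k ∈ F,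
            RS.av φ n k * RS.av φ n (k + j) * cov P (ζ 0) (ζ j) := by
          rw [hint, Finset.sum_congr rfl hrdx, hswap]
      _ = ∑' j : Fin d → ℤ, cov P (ζ 0) (ζ j) * RS.A φ n j := by
          rw [← tsum_mul_left]
          refine tsum_congr fun j => ?_
          have hA : RS.A φ n j = ((n : ℝ) ^ d)⁻¹ * ∑ k ∈ F,
              RS.av φ n k * RS.av φ n (k + j) :=
            RS.step hn (fun k => RS.av φ n k * RS.av φ n (k + j)) F
              (fun k hk => by
                show RS.av φ n k * RS.av φ n (k + j) = 0
                rw [hav0 k hk, zero_mul])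
          rw [hA, ← Finset.sum_mul]
          ring
  have main : Tendsto (fun n : ℕ => ∑' j : Fin d → ℤ, cov P (ζ 0) (ζ j) * RS.A φ (n + 1) j)
      atTop (𝓝 (∑' j : Fin d → ℤ, cov P (ζ 0) (ζ j) * ∫ x : Fin d → ℝ, φ x ^ 2)) := by
    apply tendsto_tsum_of_dominated_convergence
      (bound := fun j : Fin d → ℤ => |cov P (ζ 0) (ζ j)| * M)
    · exact hSRD.mul_right M
    · intro j
      exact (RS.A_tendsto hφ j).const_mul (cov P (ζ 0) (ζ j))
    · refine Eventually.of_forall fun n j => ?_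
      rw [Real.norm_eq_abs, abs_mul, hM]
      exact mul_le_mul_of_nonneg_left (RS.A_bound hB hsupp (Nat.le_add_left 1 n) j)
        (abs_nonneg _)
  have main2 : Tendsto (fun n : ℕ => ∫ ω, (S ζ (n + 1) φ ω) ^ 2 ∂P)
      atTop (𝓝 ((∑' k : Fin d → ℤ, cov P (ζ 0) (ζ k)) * ∫ x : Fin d → ℝ, (φ x) ^ 2)) := by
    rw [show (∑' k : Fin d → ℤ, cov P (ζ 0) (ζ k)) * ∫ x : Fin d → ℝ, (φ x) ^ 2
      = ∑' j : Fin d → ℤ, cov P (ζ 0) (ζ j) * ∫ x : Fin d → ℝ, φ x ^ 2 from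
      (tsum_mul_right).symm]
    exact main.congr fun n => (hkey (n + 1) (Nat.le_add_left 1 n)).symm
  exact (tendsto_add_atTop_iff_nat 1).mp main2
end
end

section
/- Let d ≥ 1 and let ζ = {ζ_k}_{k∈ℤ^d} be a random field of real-valued random variables on a probability space, and define S_n(φ) := n^{−d/2} Σ_{k∈ℤ^d} ζ_k φ(k/n) for φ with compact support. Let δ > 0, and suppose that for all ψ₁, ψ₂ ∈ 𝒰 with sep(supp ψ₁, supp ψ₂) ≥ δ, the pair (S_n(ψ₁), S_n(ψ₂)) is asymptotically independent as n → ∞, i.e., for all a, b ∈ ℝ, E[e^{iaS_n(ψ₁)+ibS_n(ψ₂)}] − E[e^{iaS_n(ψ₁)}]E[e^{ibS_n(ψ₂)}] → 0. Then for every integer N ≥ 2 and all φ₁, …, φ_N ∈ 𝒰 satisfying sep(supp φ_i, supp φ_j) ≥ δ for all 1 ≤ i ≠ j ≤ N, the random variables S_n(φ₁), …, S_n(φ_N) are asymptotically independent as n → ∞: for all ξ₁, …, ξ_N ∈ ℝ, E[e^{i(ξ₁S_n(φ₁)+⋯+ξ_N S_n(φ_N))}] − Π_{j=1}^N E[e^{iξ_j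 S_n(φ_j)}] → 0 as n → ∞. -/
open MeasureTheory Filter Complex Topology

noncomputable section

lemma memU_zero {d : ℕ} : memU (fun _ : Fin d → ℝ => (0 : ℝ)) :=
  ⟨0, Fin.elim0, Fin.elim0, fun l => l.elim0, by funext x; simp⟩

lemma memU_smul {d : ℕ} {φ : (Fin d → ℝ) → ℝ} (h : memU φ) (c : ℝ) :
    memU (fun x => c * φ x) := by
  obtain ⟨m, co, Q, hQ, rfl⟩ := h
  exact ⟨m, fun l => c * co l, Q, hQ, by funext x; simp [Finset.mul_sum, mul_assoc]⟩

lemma memU_add {d : ℕ} {φ ψ : (Fin d → ℝ) → ℝ} (hφ : memU φ) (hψ : memU ψ) :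
    memU (fun x => φ x + ψ x) := by
  obtain ⟨m₁, c₁, Q₁, hQ₁, rfl⟩ := hφ
  obtain ⟨m₂, c₂, Q₂, hQ₂, rfl⟩ := hψ
  refine ⟨m₁ + m₂, Fin.append c₁ c₂, Fin.append Q₁ Q₂, ?_, ?_⟩
  · intro l
    refine Fin.addCases (fun i => ?_) (fun i => ?_) l
    · rw [Fin.append_left]; exact hQ₁ i
    · rw [Fin.append_right]; exact hQ₂ i
  · funext x
    simp only
    rw [Fin.sum_univ_add]
    congr 1
    · exact Finset.sum_congr rfl fun i _ => by rw [Fin.append_left, Fin.append_left]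
    · exact Finset.sum_congr rfl fun i _ => by rw [Fin.append_right, Fin.append_right]

lemma memU_sum {d : ℕ} {ι : Type*} (s : Finset ι) (g : ι → (Fin d → ℝ) → ℝ)
    (h : ∀ j ∈ s, memU (g j)) : memU (fun x => ∑ j ∈ s, g j x) := by
  classical
  induction s using Finset.cons_induction with
  | empty => simpa using memU_zero
  | cons a s ha ih =>
    simp only [Finset.sum_cons]
    exact memU_add (h a (Finset.mem_cons_self a s))
      (ih fun j hj => h j (Finset.mem_cons_of_mem hj))

lemma memU_bound {d : ℕ} {φ : (Fin d → ℝ) → ℝ} (h : memU φ) :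
    ∃ R : ℝ, ∀ x, φ x ≠ 0 → ∀ i, |x i| ≤ R := by
  obtain ⟨m, c, Q, hQ, rfl⟩ := h
  choose a b hab hQeq using hQ
  refine ⟨∑ l, ∑ i, (|a l i| + |b l i|), fun x hx i => ?_⟩
  have hex : ∃ l, x ∈ Q l := by
    by_contra hc
    push_neg at hc
    exact hx (Finset.sum_eq_zero fun l _ => by
      rw [Set.indicator_of_notMem (hc l)]; ring)
  obtain ⟨l, hl⟩ := hex
  rw [hQeq l] at hl
  have h1 := (hl i).1
  have h2 := (hl i).2
  have key : |x i| ≤ |a l i| + |b l i| := by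
    rw [abs_le]
    constructor
    · linarith [neg_abs_le (a l i), abs_nonneg (b l i)]
    · linarith [le_abs_self (b l i), abs_nonneg (a l i)]
  refine key.trans ?_
  calc |a l i| + |b l i|
      ≤ ∑ i, (|a l i| + |b l i|) :=
        Finset.single_le_sum (f := fun i => |a l i| + |b l i|)
          (fun i _ => by positivity) (Finset.mem_univ i)
    _ ≤ ∑ l, ∑ i, (|a l i| + |b l i|) :=
        Finset.single_le_sum (f := fun l => ∑ i, (|a l i| + |b l i|))
          (fun l _ => by positivity) (Finset.mem_univ l)

lemma summable_aux {d : ℕ} {φ : (Fin d → ℝ) → ℝ} (h : memU φ) {n : ℕ} (hn : 0 < n)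
    (f : (Fin d → ℤ) → ℝ) :
    Summable (fun k : Fin d → ℤ => f k * φ (fun i => (k i : ℝ) / n)) := by
  classical
  obtain ⟨R, hR⟩ := memU_bound h
  set M : ℤ := ⌈(n : ℝ) * R⌉ with hM
  have hfin : (Set.univ.pi fun _ : Fin d => Set.Icc (-M) M).Finite :=
    Set.Finite.pi fun _ => Set.finite_Icc _ _
  apply summable_of_ne_finset_zero (s := hfin.toFinset)
  intro k hk
  rcases eq_or_ne (φ fun i => (k i : ℝ) / n) 0 with h0 | h0
  · rw [h0, mul_zero]
  exfalso
  apply hk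
  rw [Set.Finite.mem_toFinset]
  intro i _
  have hi := hR _ h0 i
  have hnpos : (0 : ℝ) < n := by exact_mod_cast hn
  have habs : |(k i : ℝ)| ≤ (n : ℝ) * R := by
    have : |(k i : ℝ)| / n ≤ R := by
      rw [← abs_of_pos hnpos, ← abs_div]
      exact hi
    calc |(k i : ℝ)| = |(k i : ℝ)| / n * n := by field_simp
      _ ≤ R * n := by nlinarith
      _ = (n : ℝ) * R := mul_comm _ _
  rw [abs_le] at habs
  constructor
  · have : -(M : ℝ) ≤ (k i : ℝ) := by
      have := Int.le_ceil ((n : ℝ) * R)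
      linarith [habs.1]
    exact_mod_cast this
  · have : (k i : ℝ) ≤ (M : ℝ) := habs.2.trans (Int.le_ceil _)
    exact_mod_cast this

lemma S_zero {d : ℕ} [NeZero d] {Ω : Type*} (ζ : (Fin d → ℤ) → Ω → ℝ)
    (φ : (Fin d → ℝ) → ℝ) (ω : Ω) : S ζ 0 φ ω = 0 := by
  have hd : (-(d : ℝ) / 2) ≠ 0 := by
    have : (0:ℝ) < d := by exact_mod_cast Nat.pos_of_ne_zero (NeZero.ne d)
    intro hc
    rw [div_eq_zero_iff] at hc
    rcases hc with hc | hc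
    · rw [neg_eq_zero, Nat.cast_eq_zero] at hc
      exact NeZero.ne d hc
    · norm_num at hc
  simp [S, Real.zero_rpow hd]

lemma S_smul {d : ℕ} {Ω : Type*} (ζ : (Fin d → ℤ) → Ω → ℝ) (n : ℕ) (c : ℝ)
    (φ : (Fin d → ℝ) → ℝ) (ω : Ω) :
    S ζ n (fun x => c * φ x) ω = c * S ζ n φ ω := by
  unfold S
  rw [mul_left_comm]
  congr 1
  rw [← tsum_mul_left]
  congr 1
  funext k
  ring

lemma S_sum {d : ℕ} [NeZero d] {Ω : Type*} (ζ : (Fin d → ℤ) → Ω → ℝ) (n : ℕ)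
    {ι : Type*} (s : Finset ι) (g : ι → (Fin d → ℝ) → ℝ)
    (hg : ∀ j ∈ s, memU (g j)) (ω : Ω) :
    S ζ n (fun x => ∑ j ∈ s, g j x) ω = ∑ j ∈ s, S ζ n (g j) ω := by
  rcases Nat.eq_zero_or_pos n with rfl | hn
  · simp [S_zero]
  unfold S
  rw [← Finset.mul_sum]
  congr 1
  calc ∑' k : Fin d → ℤ, ζ k ω * ∑ j ∈ s, g j (fun i => (k i : ℝ) / n)
      = ∑' k : Fin d → ℤ, ∑ j ∈ s, ζ k ω * g j (fun i => (k i : ℝ) / n) := by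
        congr 1; funext k; rw [Finset.mul_sum]
    _ = ∑ j ∈ s, ∑' k : Fin d → ℤ, ζ k ω * g j (fun i => (k i : ℝ) / n) :=
        Summable.tsum_finsetSum fun j hj => summable_aux (hg j hj) hn _

lemma sep_le_dist {d : ℕ} {A B : Set (Fin d → ℝ)} {x y : Fin d → ℝ}
    (hx : x ∈ A) (hy : y ∈ B) : sep A B ≤ dist x y :=
  csInf_le ⟨0, by rintro r ⟨a, ha, b, hb, rfl⟩; exact dist_nonneg⟩
    (Set.mem_image2_of_mem hx hy)

lemma nonempty_of_sep {d : ℕ} {A B : Set (Fin d → ℝ)} {δ : ℝ} (hδ : 0 < δ)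
    (h : δ ≤ sep A B) : A.Nonempty ∧ B.Nonempty := by
  by_contra hc
  rw [not_and_or, Set.not_nonempty_iff_eq_empty, Set.not_nonempty_iff_eq_empty] at hc
  have he : Set.image2 dist A B = ∅ := by
    rcases hc with rfl | rfl
    · exact Set.image2_empty_left
    · exact Set.image2_empty_right
  rw [sep, he, Real.sInf_empty] at h
  linarith

lemma le_sep_of_subset_iUnion {d N : ℕ} {A B : Set (Fin d → ℝ)} {δ : ℝ}
    (C : Fin N → Set (Fin d → ℝ))
    (hA : A ⊆ ⋃ j, C j) (hAne : A.Nonempty) (hBne : B.Nonempty)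
    (h : ∀ j, δ ≤ sep (C j) B) : δ ≤ sep A B := by
  apply le_csInf
  · obtain ⟨x, hx⟩ := hAne
    obtain ⟨y, hy⟩ := hBne
    exact ⟨_, Set.mem_image2_of_mem hx hy⟩
  rintro r ⟨x, hx, y, hy, rfl⟩
  obtain ⟨_, ⟨j, rfl⟩, hxj⟩ := hA hx
  exact (h j).trans (sep_le_dist hxj hy)

lemma norm_int_exp_le_one {Ω : Type*} [MeasurableSpace Ω] (P : Measure Ω)
    [IsProbabilityMeasure P] (X : Ω → ℝ) :
    ‖∫ ω, Complex.exp (Complex.I * ((X ω : ℝ) : ℂ)) ∂P‖ ≤ 1 := by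
  refine (norm_integral_le_integral_norm _).trans ?_
  have h1 : ∀ ω, ‖Complex.exp (Complex.I * ((X ω : ℝ) : ℂ))‖ = 1 := fun ω => by
    rw [Complex.norm_exp]
    simp
  simp [h1]

/-- If pairs `(S_n(ψ₁), S_n(ψ₂))` are asymptotically independent
for all `ψ₁, ψ₂ ∈ 𝒰` with `δ`-separated supports, then `S_n(φ₁), …, S_n(φ_N)` are
asymptotically independent for all `φ₁, …, φ_N ∈ 𝒰` with pairwise `δ`-separated
supports. -/
theorem stmt5 {d : ℕ} [NeZero d] {Ω : Type*} [MeasurableSpace Ω]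
    (P : Measure Ω) [IsProbabilityMeasure P]
    (ζ : (Fin d → ℤ) → Ω → ℝ)
    (hmeas : ∀ k, Measurable (ζ k))
    (δ : ℝ) (hδ : 0 < δ)
    (hpair : ∀ ψ₁ ψ₂ : (Fin d → ℝ) → ℝ, memU ψ₁ → memU ψ₂ →
      δ ≤ sep (Function.support ψ₁) (Function.support ψ₂) →
      ∀ a b : ℝ,
        Tendsto (fun n : ℕ =>
          (∫ ω, Complex.exp (Complex.I * ((a * S ζ n ψ₁ ω + b * S ζ n ψ₂ ω : ℝ) : ℂ)) ∂P)
            - (∫ ω, Complex.exp (Complex.I * ((a * S ζ n ψ₁ ω : ℝ) : ℂ)) ∂P)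
              * (∫ ω, Complex.exp (Complex.I * ((b * S ζ n ψ₂ ω : ℝ) : ℂ)) ∂P))
          atTop (𝓝 0)) :
    ∀ N : ℕ, 2 ≤ N → ∀ φ : Fin N → (Fin d → ℝ) → ℝ, (∀ j, memU (φ j)) →
      (∀ i j, i ≠ j → δ ≤ sep (Function.support (φ i)) (Function.support (φ j))) →
      ∀ ξ : Fin N → ℝ,
        Tendsto (fun n : ℕ =>
          (∫ ω, Complex.exp (Complex.I * ((∑ j, ξ j * S ζ n (φ j) ω : ℝ) : ℂ)) ∂P)
            - ∏ j, ∫ ω, Complex.exp (Complex.I * ((ξ j * S ζ n (φ j) ω : ℝ) : ℂ)) ∂P)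
          atTop (𝓝 0) := by
  intro N hN φ hφU hsepa ξ
  clear hN
  induction N with
  | zero =>
    have heq : ∀ n : ℕ,
        (∫ ω, Complex.exp (Complex.I * ((∑ j : Fin 0, ξ j * S ζ n (φ j) ω : ℝ) : ℂ)) ∂P)
          - ∏ j : Fin 0, ∫ ω, Complex.exp (Complex.I * ((ξ j * S ζ n (φ j) ω : ℝ) : ℂ)) ∂P
        = 0 := by
      intro n
      simp
    simp only [heq]
    exact tendsto_const_nhds
  | succ N IH =>
    set ψ : (Fin d → ℝ) → ℝ := fun x => ∑ j : Fin N, ξ j.castSucc * φ j.castSucc x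
      with hψdef
    have hψU : memU ψ := by
      rw [hψdef]
      exact memU_sum Finset.univ _ (fun j _ => memU_smul (hφU j.castSucc) (ξ j.castSucc))
    have hSψ : ∀ (n : ℕ) ω, S ζ n ψ ω = ∑ j : Fin N, ξ j.castSucc * S ζ n (φ j.castSucc) ω := by
      intro n ω
      rw [hψdef]
      exact (S_sum ζ n Finset.univ (fun (j : Fin N) x => ξ j.castSucc * φ j.castSucc x)
        (fun j _ => memU_smul (hφU j.castSucc) (ξ j.castSucc)) ω).trans
        (Finset.sum_congr rfl fun j _ => S_smul ζ n (ξ j.castSucc) (φ j.castSucc) ω)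
    have hint1 : ∀ n : ℕ,
        (∫ ω, Complex.exp (Complex.I * ((∑ j, ξ j * S ζ n (φ j) ω : ℝ) : ℂ)) ∂P)
          = ∫ ω, Complex.exp (Complex.I *
              ((1 * S ζ n ψ ω + ξ (Fin.last N) * S ζ n (φ (Fin.last N)) ω : ℝ) : ℂ)) ∂P := by
      intro n
      congr 1
      funext ω
      rw [Fin.sum_univ_castSucc, one_mul, hSψ]
    have hint2 : ∀ n : ℕ,
        (∫ ω, Complex.exp (Complex.I * ((1 * S ζ n ψ ω : ℝ) : ℂ)) ∂P)
          = ∫ ω, Complex.exp (Complex.I *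
              ((∑ j : Fin N, ξ j.castSucc * S ζ n (φ j.castSucc) ω : ℝ) : ℂ)) ∂P := by
      intro n
      congr 1
      funext ω
      rw [one_mul, hSψ]
    have hT1 : Tendsto (fun n : ℕ =>
        (∫ ω, Complex.exp (Complex.I *
            ((1 * S ζ n ψ ω + ξ (Fin.last N) * S ζ n (φ (Fin.last N)) ω : ℝ) : ℂ)) ∂P)
          - (∫ ω, Complex.exp (Complex.I * ((1 * S ζ n ψ ω : ℝ) : ℂ)) ∂P)
            * (∫ ω, Complex.exp (Complex.I *
                ((ξ (Fin.last N) * S ζ n (φ (Fin.last N)) ω : ℝ) : ℂ)) ∂P))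
        atTop (𝓝 0) := by
      by_cases hall : ∀ j : Fin N, ξ j.castSucc = 0
      · have hz : ∀ (n : ℕ) ω, S ζ n ψ ω = 0 := fun n ω => by
          rw [hSψ]
          exact Finset.sum_eq_zero fun j _ => by rw [hall j, zero_mul]
        have heq : ∀ n : ℕ,
            (∫ ω, Complex.exp (Complex.I *
                ((1 * S ζ n ψ ω + ξ (Fin.last N) * S ζ n (φ (Fin.last N)) ω : ℝ) : ℂ)) ∂P)
              - (∫ ω, Complex.exp (Complex.I * ((1 * S ζ n ψ ω : ℝ) : ℂ)) ∂P)
                * (∫ ω, Complex.exp (Complex.I *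
                    ((ξ (Fin.last N) * S ζ n (φ (Fin.last N)) ω : ℝ) : ℂ)) ∂P) = 0 := by
          intro n
          simp [hz]
        simp only [heq]
        exact tendsto_const_nhds
      · push_neg at hall
        obtain ⟨j₀, hj₀⟩ := hall
        have hj₀ne : (j₀.castSucc : Fin (N + 1)) ≠ Fin.last N := (Fin.castSucc_lt_last j₀).ne
        obtain ⟨⟨x₀, hx₀⟩, hBne⟩ :=
          nonempty_of_sep hδ (hsepa j₀.castSucc (Fin.last N) hj₀ne)
        have hψx₀ : ψ x₀ = ξ j₀.castSucc * φ j₀.castSucc x₀ := by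
          rw [hψdef]
          refine Finset.sum_eq_single j₀ (fun j _ hj => ?_) (by simp)
          have hne : (j.castSucc : Fin (N + 1)) ≠ j₀.castSucc := fun h =>
            hj (Fin.castSucc_injective N h)
          have hzero : φ j.castSucc x₀ = 0 := by
            by_contra hc
            have h0 := (hsepa j.castSucc j₀.castSucc hne).trans
              (sep_le_dist (Function.mem_support.2 hc) hx₀)
            rw [dist_self] at h0
            linarith
          rw [hzero, mul_zero]
        have hψne : (Function.support ψ).Nonempty :=
          ⟨x₀, by rw [Function.mem_support, hψx₀]; exact mul_ne_zero hj₀ hx₀⟩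
        have hsub : Function.support ψ ⊆ ⋃ j : Fin N, Function.support (φ j.castSucc) := by
          intro x hx
          rw [Function.mem_support] at hx
          by_contra hc
          simp only [Set.mem_iUnion, Function.mem_support, not_exists, not_not] at hc
          refine hx ?_
          rw [hψdef]
          exact Finset.sum_eq_zero fun j _ => by rw [hc j, mul_zero]
        have hsep2 : δ ≤ sep (Function.support ψ) (Function.support (φ (Fin.last N))) :=
          le_sep_of_subset_iUnion _ hsub hψne hBne
            (fun j => hsepa j.castSucc (Fin.last N) (Fin.castSucc_lt_last j).ne)
        exact hpair ψ (φ (Fin.last N)) hψU (hφU (Fin.last N)) hsep2 1 (ξ (Fin.last N))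
    have hT2 : Tendsto (fun n : ℕ =>
        ((∫ ω, Complex.exp (Complex.I * ((1 * S ζ n ψ ω : ℝ) : ℂ)) ∂P)
          - ∏ j : Fin N, ∫ ω, Complex.exp (Complex.I *
              ((ξ j.castSucc * S ζ n (φ j.castSucc) ω : ℝ) : ℂ)) ∂P)
          * (∫ ω, Complex.exp (Complex.I *
              ((ξ (Fin.last N) * S ζ n (φ (Fin.last N)) ω : ℝ) : ℂ)) ∂P))
        atTop (𝓝 0) := by
      have hIH := IH (fun j => φ j.castSucc) (fun j => hφU j.castSucc)
        (fun i j hij => hsepa i.castSucc j.castSucc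
          (fun h => hij (Fin.castSucc_injective N h)))
        (fun j => ξ j.castSucc)
      have hbr : Tendsto (fun n : ℕ =>
          (∫ ω, Complex.exp (Complex.I * ((1 * S ζ n ψ ω : ℝ) : ℂ)) ∂P)
            - ∏ j : Fin N, ∫ ω, Complex.exp (Complex.I *
                ((ξ j.castSucc * S ζ n (φ j.castSucc) ω : ℝ) : ℂ)) ∂P)
          atTop (𝓝 0) := hIH.congr fun n => by rw [← hint2 n]
      exact hbr.zero_mul_isBoundedUnder_le
        (isBoundedUnder_of ⟨1, fun n => norm_int_exp_le_one P _⟩)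
    have hsum := hT1.add hT2
    rw [add_zero] at hsum
    refine hsum.congr fun n => ?_
    rw [hint1 n, Fin.prod_univ_castSucc, hint2 n]
    ring
end
end

section
/- Let d ≥ 1 and let φ: ℝ^d → ℝ be a bounded, compactly supported function that is continuous except on a finite union of hyperplanes (i.e. φ ∈ 𝒞). Then for every fixed j ∈ ℤ^d, lim_{n→∞} n^{−d} Σ_{k∈ℤ^d} φ(k/n) φ((j+k)/n) = ∫_{ℝ^d} |φ(x)|² dx; moreover the convergence is bounded: sup_{n∈ℕ, j∈ℤ^d} | n^{−d} Σ_{k∈ℤ^d} φ(k/n) φ((j+k)/n) | < ∞. -/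
open MeasureTheory Filter Complex Topology

noncomputable section

lemma aux_hyperplane_null {d : ℕ} (c : Fin d → ℝ) (hc : c ≠ 0) (t : ℝ) :
    volume {x : Fin d → ℝ | ∑ i, c i * x i = t} = 0 := by
  obtain ⟨i0, hi0⟩ : ∃ i, c i ≠ 0 := by
    by_contra h; push_neg at h; exact hc (funext h)
  set L : (Fin d → ℝ) →ₗ[ℝ] ℝ := ∑ i, c i • LinearMap.proj i with hL
  have hLa : ∀ x, L x = ∑ i, c i * x i := by
    intro x
    simp [hL, LinearMap.sum_apply, LinearMap.smul_apply, LinearMap.proj_apply, smul_eq_mul]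
  have hsingle : L (Pi.single i0 1) = c i0 := by
    rw [hLa, Finset.sum_eq_single i0]
    · simp
    · intro b _ hb; simp [Pi.single_apply, hb]
    · simp
  have hker : LinearMap.ker L ≠ ⊤ := by
    intro h
    have h0 := LinearMap.ker_eq_top.mp h
    rw [h0] at hsingle
    exact hi0 (by simpa using hsingle.symm)
  set x0 : Fin d → ℝ := (t / c i0) • (Pi.single i0 1 : Fin d → ℝ) with hx0def
  have hx0 : L x0 = t := by
    rw [hx0def, L.map_smul, hsingle, smul_eq_mul, div_mul_cancel₀ _ hi0]
  have hset : {x : Fin d → ℝ | ∑ i, c i * x i = t}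
      = (fun x => x + (-x0)) ⁻¹' (LinearMap.ker L : Set (Fin d → ℝ)) := by
    ext x
    simp only [Set.mem_setOf_eq, Set.mem_preimage, SetLike.mem_coe, LinearMap.mem_ker, map_add,
      map_neg, hx0, ← hLa]
    constructor
    · intro h; rw [h]; ring
    · intro h; linarith
  rw [hset, measure_preimage_add_right]
  exact Measure.addHaar_submodule volume _ hker

lemma aux_tendsto_ceil_div (x : ℝ) :
    Tendsto (fun n : ℕ => (⌈(n : ℝ) * x⌉ : ℝ) / n) atTop (𝓝 x) := by
  have h1 : Tendsto (fun n : ℕ => x + 1 / (n : ℝ)) atTop (𝓝 (x + 0)) :=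
    tendsto_const_nhds.add tendsto_one_div_atTop_nhds_zero_nat
  rw [add_zero] at h1
  refine tendsto_of_tendsto_of_tendsto_of_le_of_le' tendsto_const_nhds h1 ?_ ?_
  · filter_upwards [eventually_ge_atTop 1] with n hn
    have hn' : (0 : ℝ) < n := by exact_mod_cast hn
    rw [le_div_iff₀ hn']
    calc x * n = n * x := mul_comm _ _
      _ ≤ ⌈(n : ℝ) * x⌉ := Int.le_ceil _
  · filter_upwards [eventually_ge_atTop 1] with n hn
    have hn' : (0 : ℝ) < n := by exact_mod_cast hn
    rw [div_le_iff₀ hn']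
    have h2 := Int.ceil_lt_add_one ((n : ℝ) * x)
    have h3 : (x + 1 / n) * n = n * x + 1 := by field_simp
    linarith

lemma aux_measurable {d : ℕ} (n : ℕ) (F : (Fin d → ℤ) → ℝ) :
    Measurable (fun x : Fin d → ℝ => F (fun i => ⌈(n : ℝ) * x i⌉)) := by
  have hq : Measurable (fun x : Fin d → ℝ => fun i => ⌈(n : ℝ) * x i⌉) :=
    measurable_pi_lambda _ fun i => (measurable_const.mul (measurable_pi_apply i)).ceil
  exact (measurable_of_countable F).comp hq

lemma aux_riemann_eq {d : ℕ} (n : ℕ) (hn : n ≠ 0) (F : (Fin d → ℤ) → ℝ)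
    (hInt : Integrable (fun x : Fin d → ℝ => F (fun i => ⌈(n : ℝ) * x i⌉))) :
    ∫ x : Fin d → ℝ, F (fun i => ⌈(n : ℝ) * x i⌉)
      = (n : ℝ) ^ (-(d : ℝ)) * ∑' k : Fin d → ℤ, F k := by
  have hn' : (0 : ℝ) < n := by
    exact_mod_cast Nat.pos_of_ne_zero hn
  set q : (Fin d → ℝ) → (Fin d → ℤ) := fun x i => ⌈(n : ℝ) * x i⌉ with hq
  set A : (Fin d → ℤ) → Set (Fin d → ℝ) := fun k => q ⁻¹' {k} with hA
  have hAeq : ∀ k, A k = Set.univ.pi fun i => Set.Ioc (((k i : ℝ) - 1) / n) ((k i : ℝ) / n) := by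
    intro k
    ext x
    simp only [hA, Set.mem_preimage, Set.mem_singleton_iff, funext_iff, hq, Set.mem_pi,
      Set.mem_univ, forall_true_left, Set.mem_Ioc]
    refine forall_congr' fun i => ?_
    rw [Int.ceil_eq_iff]
    constructor
    · rintro ⟨h1, h2⟩
      constructor
      · rw [div_lt_iff₀ hn']; nlinarith
      · rw [le_div_iff₀ hn']; nlinarith
    · rintro ⟨h1, h2⟩
      rw [div_lt_iff₀ hn'] at h1
      rw [le_div_iff₀ hn'] at h2
      constructor <;> nlinarith
  have hAm : ∀ k, MeasurableSet (A k) := by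
    intro k; rw [hAeq]; exact MeasurableSet.univ_pi fun i => measurableSet_Ioc
  have hvol : ∀ k, volume (A k) = ENNReal.ofReal (1 / n) ^ d := by
    intro k
    rw [hAeq, volume_pi_pi]
    have : ∀ i : Fin d, volume (Set.Ioc (((k i : ℝ) - 1) / n) ((k i : ℝ) / n))
        = ENNReal.ofReal (1 / n) := by
      intro i
      rw [Real.volume_Ioc]
      congr 1
      field_simp
      ring
    simp [this, Finset.prod_const]
  have hunion : (⋃ k, A k) = Set.univ := by
    ext x
    simp only [Set.mem_iUnion, Set.mem_univ, iff_true]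
    exact ⟨q x, rfl⟩
  have hdisj : Pairwise (Function.onFun Disjoint A) := pairwise_disjoint_fiber q
  have hIntU : IntegrableOn (fun x : Fin d → ℝ => F (fun i => ⌈(n : ℝ) * x i⌉)) (⋃ k, A k) := by
    rw [hunion]; exact hInt.integrableOn
  have key : ∫ x : Fin d → ℝ, F (fun i => ⌈(n : ℝ) * x i⌉)
      = ∑' k, ∫ x in A k, F (fun i => ⌈(n : ℝ) * x i⌉) := by
    rw [← setIntegral_univ, ← hunion, integral_iUnion hAm hdisj hIntU]
  rw [key]
  have hpiece : ∀ k : Fin d → ℤ, (∫ x in A k, F (fun i => ⌈(n : ℝ) * x i⌉))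
      = (n : ℝ) ^ (-(d : ℝ)) * F k := by
    intro k
    have hcongr : ∫ x in A k, F (fun i => ⌈(n : ℝ) * x i⌉) = ∫ _x in A k, F k := by
      refine setIntegral_congr_fun (hAm k) fun x hx => ?_
      have : q x = k := hx
      rw [show (fun i => ⌈(n : ℝ) * x i⌉) = k from this]
    rw [hcongr, setIntegral_const, measureReal_def, hvol, smul_eq_mul]
    congr 1
    rw [ENNReal.toReal_pow, ENNReal.toReal_ofReal (by positivity)]
    rw [Real.rpow_neg hn'.le, Real.rpow_natCast, one_div, inv_pow]
  simp_rw [hpiece]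
  exact tsum_mul_left

/-- For `φ ∈ 𝒞` and each fixed `j ∈ ℤ^d`,
`n^{-d} ∑_k φ(k/n) φ((j+k)/n) → ∫_{ℝ^d} |φ(x)|² dx` as `n → ∞`, and the
quantities are bounded uniformly in `n ≥ 1` and `j`. -/
theorem stmt9 {d : ℕ} [NeZero d] (φ : (Fin d → ℝ) → ℝ) (hφ : memC φ) :
    (∀ j : Fin d → ℤ,
      Tendsto (fun n : ℕ =>
          (n : ℝ) ^ (-(d : ℝ)) * ∑' k : Fin d → ℤ,
            φ (fun i => (k i : ℝ) / n) * φ (fun i => ((j i + k i : ℤ) : ℝ) / n))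
        atTop (𝓝 (∫ x : Fin d → ℝ, (φ x) ^ 2))) ∧
    ∃ C : ℝ, ∀ n : ℕ, 1 ≤ n → ∀ j : Fin d → ℤ,
      |(n : ℝ) ^ (-(d : ℝ)) * ∑' k : Fin d → ℤ,
          φ (fun i => (k i : ℝ) / n) * φ (fun i => ((j i + k i : ℤ) : ℝ) / n)| ≤ C := by
  obtain ⟨hcs, ⟨C, hC⟩, m, c, t, hc, hcont⟩ := hφ
  have hC0 : 0 ≤ C := le_trans (abs_nonneg _) (hC 0)
  obtain ⟨R, hR⟩ := hcs.isBounded.subset_closedBall 0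
  set B : Set (Fin d → ℝ) := Metric.closedBall 0 (R + 1) with hB
  set bound : (Fin d → ℝ) → ℝ := B.indicator fun _ => C ^ 2 with hbd
  have hBmeas : MeasurableSet B := measurableSet_closedBall
  have hboundInt : Integrable bound := by
    rw [hbd, integrable_indicator_iff hBmeas]
    exact integrableOn_const measure_closedBall_lt_top.ne
  set Φ : (Fin d → ℤ) → ℕ → (Fin d → ℝ) → ℝ := fun j n x =>
    φ (fun i => ((⌈(n : ℝ) * x i⌉ : ℤ) : ℝ) / n)
      * φ (fun i => ((j i + ⌈(n : ℝ) * x i⌉ : ℤ) : ℝ) / n) with hΦ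
  -- pointwise bound
  have hptbd : ∀ (j : Fin d → ℤ) (n : ℕ), 1 ≤ n → ∀ x, ‖Φ j n x‖ ≤ bound x := by
    intro j n hn x
    have hn1 : (1 : ℝ) ≤ n := by exact_mod_cast hn
    have hn0 : (0 : ℝ) < n := lt_of_lt_of_le one_pos hn1
    by_cases hx : x ∈ B
    · rw [hbd, Set.indicator_of_mem hx, hΦ]
      rw [Real.norm_eq_abs, abs_mul, sq]
      exact mul_le_mul (hC _) (hC _) (abs_nonneg _) hC0
    · have h1 : φ (fun i => ((⌈(n : ℝ) * x i⌉ : ℤ) : ℝ) / n) = 0 := by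
        by_contra h
        apply hx
        have hmem := hR (subset_tsupport φ h)
        rw [Metric.mem_closedBall] at hmem ⊢
        have hd1 : dist x (fun i => ((⌈(n : ℝ) * x i⌉ : ℤ) : ℝ) / n) ≤ 1 := by
          rw [dist_pi_le_iff one_pos.le]
          intro i
          rw [Real.dist_eq, abs_le]
          have e1 : (n : ℝ) * x i ≤ ⌈(n : ℝ) * x i⌉ := Int.le_ceil _
          have e2 : ((⌈(n : ℝ) * x i⌉ : ℤ) : ℝ) < (n : ℝ) * x i + 1 := Int.ceil_lt_add_one _
          have e3 : x i ≤ ((⌈(n : ℝ) * x i⌉ : ℤ) : ℝ) / n := by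
            rw [le_div_iff₀ hn0]; nlinarith
          have e4 : ((⌈(n : ℝ) * x i⌉ : ℤ) : ℝ) / n ≤ x i + 1 := by
            rw [div_le_iff₀ hn0]; nlinarith
          constructor <;> linarith
        calc dist x 0 ≤ dist x (fun i => ((⌈(n : ℝ) * x i⌉ : ℤ) : ℝ) / n)
              + dist (fun i => ((⌈(n : ℝ) * x i⌉ : ℤ) : ℝ) / n) (0 : Fin d → ℝ) :=
            dist_triangle _ _ _
          _ ≤ 1 + R := add_le_add hd1 hmem
          _ = R + 1 := add_comm _ _
      rw [hbd, Set.indicator_of_notMem hx, hΦ]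
      simp [h1]
  -- measurability
  have hmeasΦ : ∀ (j : Fin d → ℤ) (n : ℕ), AEStronglyMeasurable (Φ j n) volume := by
    intro j n
    exact (aux_measurable n fun k =>
      φ (fun i => (k i : ℝ) / n) * φ (fun i => ((j i + k i : ℤ) : ℝ) / n)).aestronglyMeasurable
  have hIntΦ : ∀ (j : Fin d → ℤ) (n : ℕ), 1 ≤ n → Integrable (Φ j n) := fun j n hn =>
    Integrable.mono' hboundInt (hmeasΦ j n) (ae_of_all _ (hptbd j n hn))
  -- identity
  have hIdent : ∀ (j : Fin d → ℤ) (n : ℕ), 1 ≤ n →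
      (n : ℝ) ^ (-(d : ℝ)) * (∑' k : Fin d → ℤ,
        φ (fun i => (k i : ℝ) / n) * φ (fun i => ((j i + k i : ℤ) : ℝ) / n))
      = ∫ x, Φ j n x := by
    intro j n hn
    exact (aux_riemann_eq n (Nat.one_le_iff_ne_zero.mp hn)
      (fun k => φ (fun i => (k i : ℝ) / n) * φ (fun i => ((j i + k i : ℤ) : ℝ) / n))
      (hIntΦ j n hn)).symm
  -- null set of discontinuities
  have hnull : volume (⋃ l, {x : Fin d → ℝ | ∑ i, c l i * x i = t l}) = 0 :=
    measure_iUnion_null fun l => aux_hyperplane_null (c l) (hc l) (t l)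
  have hopen : IsOpen (⋃ l, {x : Fin d → ℝ | ∑ i, c l i * x i = t l})ᶜ := by
    refine (isClosed_iUnion_of_finite fun l => ?_).isOpen_compl
    exact isClosed_eq (continuous_finset_sum _ fun i _ =>
      (continuous_const.mul (continuous_apply i))) continuous_const
  -- a.e. pointwise convergence
  have hae : ∀ j : Fin d → ℤ, ∀ᵐ x : Fin d → ℝ,
      Tendsto (fun n : ℕ => Φ j n x) atTop (𝓝 (φ x ^ 2)) := by
    intro j
    refine (measure_eq_zero_iff_ae_notMem.mp hnull).mono fun x hx => ?_
    have hct : ContinuousAt φ x := hcont.continuousAt (hopen.mem_nhds hx)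
    have h1 : Tendsto (fun n : ℕ => fun i => ((⌈(n : ℝ) * x i⌉ : ℤ) : ℝ) / n) atTop (𝓝 x) := by
      rw [tendsto_pi_nhds]; intro i; exact aux_tendsto_ceil_div (x i)
    have h2 : Tendsto (fun n : ℕ => fun i => ((j i + ⌈(n : ℝ) * x i⌉ : ℤ) : ℝ) / n)
        atTop (𝓝 x) := by
      rw [tendsto_pi_nhds]; intro i
      simp_rw [Int.cast_add, add_div]
      have hj : Tendsto (fun n : ℕ => ((j i : ℤ) : ℝ) / n) atTop (𝓝 0) :=
        tendsto_const_div_atTop_nhds_zero_nat _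
      simpa using hj.add (aux_tendsto_ceil_div (x i))
    have := (hct.tendsto.comp h1).mul (hct.tendsto.comp h2)
    rw [hΦ]
    simpa [sq] using this
  constructor
  · intro j
    have hDCT : Tendsto (fun n : ℕ => ∫ x, Φ j n x) atTop (𝓝 (∫ x : Fin d → ℝ, φ x ^ 2)) := by
      refine tendsto_integral_filter_of_dominated_convergence bound ?_ ?_ hboundInt (hae j)
      · exact Eventually.of_forall fun n => hmeasΦ j n
      · filter_upwards [eventually_ge_atTop 1] with n hn
        exact ae_of_all _ (hptbd j n hn)
    refine hDCT.congr' ?_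
    filter_upwards [eventually_ge_atTop 1] with n hn
    exact (hIdent j n hn).symm
  · refine ⟨∫ x, bound x, fun n hn j => ?_⟩
    rw [hIdent j n hn, ← Real.norm_eq_abs]
    exact norm_integral_le_of_norm_le hboundInt (ae_of_all _ (hptbd j n hn))
end
end
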